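/- The perturbed functions are probability densities: Let β > 1, C > 0, d ≥ 1, σ > 0. Let φ(u) = (2π)^{−1/2} e^{−u²/2} and f₀(x) = σ^{−d} ∏_{i=1}^d φ(x_i/σ). Let Γ₀ : ℝ → ℝ be bounded and integrable with Γ₀(u) ≠ 0 only for u ∈ (−1/2, 1/2) and ∫ Γ₀ = 0; let Γ(u) = dC ∏_{i=1}^d Γ₀(u_i), γ_{m,j}(x) = m^{−β} Γ(mx − j) for j ∈ {1,…,m−1}ᵈ, and f_ω = f₀ + Σ_j ω(j) γ_{m,j} for ω ∈ {0,1}^{{1,…,m−1}ᵈ}. If m^β > d C (σ ‖Γ₀‖_∞ / φ(1/σ))ᵈ, then for every ω: f_ω(x) ≥ 0 for all x ∈ ℝᵈ and ∫_{ℝᵈ} f_ω = 1; in particular, the minimum of f₀ over [−1,1]ᵈ equals (φ(1/σ)/σ)ᵈ and exceeds the sup-norm of the perturbation, whose support is contained in [0,1]ᵈ. -/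

import Mathlib

open MeasureTheory Real Filter

/-- The standard normal density `φ(u) = (2π)^(−1/2) e^(−u²/2)`. -/
noncomputable def stdNormal (u : ℝ) : ℝ := (Real.sqrt (2 * Real.pi))⁻¹ * Real.exp (-u ^ 2 / 2)

/-- The base density `f₀(x) = σ^(−d) ∏ᵢ φ(xᵢ/σ)`. -/
noncomputable def gaussBase (σ : ℝ) (d : ℕ) (x : Fin d → ℝ) : ℝ :=
  (σ ^ d)⁻¹ * ∏ i, stdNormal (x i / σ)

/-- The perturbation `γ_{m,j}(x) = m^(−β) Γ(m x − j)` where `Γ(u) = d C ∏ᵢ Γ₀(uᵢ)` and the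
multi-index `j : Fin d → Fin (m-1)` encodes `j ∈ {1, …, m−1}^d` via `jᵢ = (j i) + 1`. -/
noncomputable def gammaPert (β C : ℝ) (Γ₀ : ℝ → ℝ) (d m : ℕ)
    (j : Fin d → Fin (m - 1)) (x : Fin d → ℝ) : ℝ :=
  (m : ℝ) ^ (-β) * ((d : ℝ) * C * ∏ i, Γ₀ ((m : ℝ) * x i - (((j i : ℕ) : ℝ) + 1)))

/-- The perturbed function `f_ω = f₀ + Σ_j ω(j) γ_{m,j}`. -/
noncomputable def perturbedDensity (β C σ : ℝ) (Γ₀ : ℝ → ℝ) (d m : ℕ)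
    (ω : (Fin d → Fin (m - 1)) → Bool) (x : Fin d → ℝ) : ℝ :=
  gaussBase σ d x + ∑ j : Fin d → Fin (m - 1), ((ω j).toNat : ℝ) * gammaPert β C Γ₀ d m j x

lemma stdNormal_pos (u : ℝ) : 0 < stdNormal u := by
  unfold stdNormal
  positivity

lemma stdNormal_integrable : Integrable stdNormal := by
  have : Integrable (fun u : ℝ => Real.exp (-(1/2 : ℝ) * u ^ 2)) :=
    integrable_exp_neg_mul_sq (by norm_num)
  have h2 : Integrable (fun u : ℝ => Real.exp (-u ^ 2 / 2)) := by
    convert this using 2 with u; ring_nf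
  exact h2.const_mul _

lemma integral_stdNormal : (∫ u : ℝ, stdNormal u) = 1 := by
  unfold stdNormal
  rw [MeasureTheory.integral_const_mul]
  have : (∫ u : ℝ, Real.exp (-u ^ 2 / 2)) = ∫ u : ℝ, Real.exp (-(1/2 : ℝ) * u ^ 2) := by
    congr 1 with u; ring_nf
  rw [this, integral_gaussian]
  have h2 : (π : ℝ) / (1/2) = 2 * π := by ring
  rw [h2]
  exact inv_mul_cancel₀ (by positivity)

lemma stdNormal_anti {a b : ℝ} (h : a ^ 2 ≤ b ^ 2) : stdNormal b ≤ stdNormal a := by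
  unfold stdNormal
  have : Real.exp (-b ^ 2 / 2) ≤ Real.exp (-a ^ 2 / 2) := by
    apply Real.exp_le_exp.2; linarith
  have hpos : (0:ℝ) ≤ (Real.sqrt (2 * Real.pi))⁻¹ := by positivity
  exact mul_le_mul_of_nonneg_left this hpos

set_option maxHeartbeats 1000000 in
/-- the perturbed functions are probability densities. If
`m^β > d C (σ ‖Γ₀‖_∞ / φ(1/σ))^d` then every `f_ω` is nonnegative and integrates to `1`;
moreover the minimum of `f₀` over `[−1,1]^d` equals `(φ(1/σ)/σ)^d`, it strictly exceeds
the sup-norm of the perturbation, and the perturbation is supported in `[0,1]^d`. -/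
theorem perturbed_functions_are_densities
    (β C σ : ℝ) (hβ : 1 < β) (hC : 0 < C) (hσ : 0 < σ) (d : ℕ) (hd : 1 ≤ d)
    (Γ₀ : ℝ → ℝ) (hΓmeas : Measurable Γ₀) (hΓint : Integrable Γ₀)
    (hΓbd : ∃ M : ℝ, ∀ u, |Γ₀ u| ≤ M)
    (hΓsupp : ∀ u : ℝ, Γ₀ u ≠ 0 → u ∈ Set.Ioo (-(1 / 2) : ℝ) (1 / 2))
    (hΓ0 : (∫ u : ℝ, Γ₀ u) = 0)
    (m : ℕ) (hm : 2 ≤ m)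
    (hmβ : (d : ℝ) * C * (σ * (⨆ u : ℝ, |Γ₀ u|) / stdNormal (1 / σ)) ^ d < (m : ℝ) ^ β) :
    ∀ ω : (Fin d → Fin (m - 1)) → Bool,
      (∀ x : Fin d → ℝ, 0 ≤ perturbedDensity β C σ Γ₀ d m ω x) ∧
      (∫ x : Fin d → ℝ, perturbedDensity β C σ Γ₀ d m ω x) = 1 ∧
      IsLeast (gaussBase σ d '' Set.Icc (fun _ => (-1 : ℝ)) (fun _ => (1 : ℝ)))
        ((stdNormal (1 / σ) / σ) ^ d) ∧
      (∀ x : Fin d → ℝ,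
        |∑ j : Fin d → Fin (m - 1), ((ω j).toNat : ℝ) * gammaPert β C Γ₀ d m j x|
          < (stdNormal (1 / σ) / σ) ^ d) ∧
      Function.support
          (fun x : Fin d → ℝ =>
            ∑ j : Fin d → Fin (m - 1), ((ω j).toNat : ℝ) * gammaPert β C Γ₀ d m j x)
        ⊆ Set.Icc (fun _ => (0 : ℝ)) (fun _ => (1 : ℝ)) := by
  intro ω
  have hm0 : (0:ℝ) < (m:ℝ) := by positivity
  have hmne : (m:ℝ) ≠ 0 := hm0.ne'
  have hm2 : (2:ℝ) ≤ (m:ℝ) := by exact_mod_cast hm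
  have hφ : 0 < stdNormal (1 / σ) := stdNormal_pos _
  set Φ : ℝ := (stdNormal (1 / σ) / σ) ^ d with hΦdef
  have hΦpos : 0 < Φ := by positivity
  -- the sup of |Γ₀|
  set M : ℝ := ⨆ u : ℝ, |Γ₀ u| with hMdef
  obtain ⟨B, hB⟩ := hΓbd
  have hbdd : BddAbove (Set.range fun u => |Γ₀ u|) := ⟨B, by rintro _ ⟨u, rfl⟩; exact hB u⟩
  have hM : ∀ u, |Γ₀ u| ≤ M := fun u => le_ciSup hbdd u
  have hM0 : 0 ≤ M := (abs_nonneg _).trans (hM 0)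
  -- Support of the perturbation
  have hsupp : Function.support
      (fun x : Fin d → ℝ =>
        ∑ j : Fin d → Fin (m - 1), ((ω j).toNat : ℝ) * gammaPert β C Γ₀ d m j x)
      ⊆ Set.Icc (fun _ => (0 : ℝ)) (fun _ => (1 : ℝ)) := by
    intro x hx
    simp only [Function.mem_support] at hx
    obtain ⟨j, -, hj⟩ := Finset.exists_ne_zero_of_sum_ne_zero hx
    have hγ : gammaPert β C Γ₀ d m j x ≠ 0 := fun h => hj (by rw [h, mul_zero])
    have hprod : (∏ i, Γ₀ ((m : ℝ) * x i - (((j i : ℕ) : ℝ) + 1))) ≠ 0 := by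
      intro h; apply hγ; unfold gammaPert; rw [h, mul_zero, mul_zero]
    rw [Finset.prod_ne_zero_iff] at hprod
    rw [Set.mem_Icc]
    constructor <;> intro i
    · have h1 := hΓsupp _ (hprod i (Finset.mem_univ i))
      have h2 := h1.1
      have hji : (0:ℝ) ≤ ((j i : ℕ) : ℝ) := Nat.cast_nonneg _
      show (0:ℝ) ≤ x i
      have hx0 : 0 < (m:ℝ) * x i := by simp only [Set.mem_Ioo] at h1; linarith [h1.1]
      have hdiv := div_pos hx0 hm0
      rw [mul_div_cancel_left₀ _ hmne] at hdiv
      exact hdiv.le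
    · have h1 := hΓsupp _ (hprod i (Finset.mem_univ i))
      have h2 := h1.2
      have hji : ((j i : ℕ) : ℝ) + 1 ≤ (m : ℝ) - 1 := by
        have : (j i : ℕ) < m - 1 := (j i).isLt
        have : (j i : ℕ) + 1 ≤ m - 1 := this
        have h3 : ((j i : ℕ) : ℝ) + 1 ≤ ((m - 1 : ℕ) : ℝ) := by exact_mod_cast this
        rwa [Nat.cast_sub (by omega), Nat.cast_one] at h3
      show x i ≤ (1:ℝ)
      have h4 : (m:ℝ) * x i < (m:ℝ) * 1 := by
        simp only [Set.mem_Ioo] at h1; rw [mul_one]; linarith [h1.2]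
      exact ((mul_lt_mul_iff_right₀ hm0).1 h4).le
  -- The minimum of the base density
  have hmin : IsLeast (gaussBase σ d '' Set.Icc (fun _ => (-1 : ℝ)) (fun _ => (1 : ℝ))) Φ := by
    constructor
    · refine ⟨fun _ => 1, ?_, ?_⟩
      · rw [Set.mem_Icc]; constructor <;> intro i <;> norm_num
      · unfold gaussBase
        rw [Finset.prod_const, hΦdef, div_pow, Finset.card_univ, Fintype.card_fin]
        field_simp
    · rintro y ⟨x, hx, rfl⟩
      rw [Set.mem_Icc] at hx
      unfold gaussBase
      have key : ∀ i : Fin d, stdNormal (1 / σ) / σ ≤ stdNormal (x i / σ) * σ⁻¹ := by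
        intro i
        have h1 : (x i / σ) ^ 2 ≤ (1 / σ) ^ 2 := by
          have ha : (-1:ℝ) ≤ x i := hx.1 i
          have hb : x i ≤ (1:ℝ) := hx.2 i
          have hx2 : (x i) ^ 2 ≤ 1 := by nlinarith
          rw [div_pow, div_pow]
          apply div_le_div_of_nonneg_right _ (by positivity)
          · simpa using hx2
        have := stdNormal_anti h1
        rw [div_eq_mul_inv]
        exact mul_le_mul_of_nonneg_right this (by positivity)
      calc Φ = ∏ _i : Fin d, stdNormal (1 / σ) / σ := by
              rw [Finset.prod_const, Finset.card_univ, Fintype.card_fin]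
        _ ≤ ∏ i, stdNormal (x i / σ) * σ⁻¹ := by
              apply Finset.prod_le_prod
              · intro i _; positivity
              · intro i _; exact key i
        _ = (σ ^ d)⁻¹ * ∏ i, stdNormal (x i / σ) := by
              rw [Finset.prod_mul_distrib, Finset.prod_const, Finset.card_univ,
                Fintype.card_fin, mul_comm, ← inv_pow]
  -- the sup-norm bound of the perturbation
  have hbound : ∀ x : Fin d → ℝ,
      |∑ j : Fin d → Fin (m - 1), ((ω j).toNat : ℝ) * gammaPert β C Γ₀ d m j x| < Φ := by
    intro x
    have hterm : ∀ j : Fin d → Fin (m - 1),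
        |((ω j).toNat : ℝ) * gammaPert β C Γ₀ d m j x| ≤ (m:ℝ) ^ (-β) * ((d:ℝ) * C * M ^ d) := by
      intro j
      have h1 : |((ω j).toNat : ℝ)| ≤ 1 := by
        cases ω j <;> simp
      have h2 : |gammaPert β C Γ₀ d m j x| ≤ (m:ℝ) ^ (-β) * ((d:ℝ) * C * M ^ d) := by
        unfold gammaPert
        rw [abs_mul, abs_mul, abs_of_nonneg (Real.rpow_nonneg hm0.le _),
          abs_of_nonneg (by positivity : (0:ℝ) ≤ (d:ℝ) * C)]
        apply mul_le_mul_of_nonneg_left _ (Real.rpow_nonneg hm0.le _)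
        apply mul_le_mul_of_nonneg_left _ (by positivity)
        rw [Finset.abs_prod]
        calc (∏ i, |Γ₀ ((m : ℝ) * x i - (((j i : ℕ) : ℝ) + 1))|) ≤ ∏ _i : Fin d, M := by
              apply Finset.prod_le_prod
              · intro i _; exact abs_nonneg _
              · intro i _; exact hM _
          _ = M ^ d := by rw [Finset.prod_const, Finset.card_univ, Fintype.card_fin]
      calc |((ω j).toNat : ℝ) * gammaPert β C Γ₀ d m j x|
          = |((ω j).toNat : ℝ)| * |gammaPert β C Γ₀ d m j x| := abs_mul _ _
        _ ≤ 1 * ((m:ℝ) ^ (-β) * ((d:ℝ) * C * M ^ d)) := by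
              apply mul_le_mul h1 h2 (abs_nonneg _) (by norm_num)
        _ = (m:ℝ) ^ (-β) * ((d:ℝ) * C * M ^ d) := one_mul _
    -- at most one term is nonzero
    have hsum : |∑ j : Fin d → Fin (m - 1), ((ω j).toNat : ℝ) * gammaPert β C Γ₀ d m j x|
        ≤ (m:ℝ) ^ (-β) * ((d:ℝ) * C * M ^ d) := by
      by_cases hex : ∃ j₀ : Fin d → Fin (m - 1), ((ω j₀).toNat : ℝ) * gammaPert β C Γ₀ d m j₀ x ≠ 0
      · obtain ⟨j₀, hj₀⟩ := hex
        have hzero : ∀ j : Fin d → Fin (m-1), j ≠ j₀ →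
            ((ω j).toNat : ℝ) * gammaPert β C Γ₀ d m j x = 0 := by
          intro j hne
          by_contra hj
          have hγ₀ : gammaPert β C Γ₀ d m j₀ x ≠ 0 := fun h => hj₀ (by rw [h, mul_zero])
          have hγ : gammaPert β C Γ₀ d m j x ≠ 0 := fun h => hj (by rw [h, mul_zero])
          have hp : ∀ (k : Fin d → Fin (m-1)), gammaPert β C Γ₀ d m k x ≠ 0 →
              ∀ i, Γ₀ ((m : ℝ) * x i - (((k i : ℕ) : ℝ) + 1)) ≠ 0 := by
            intro k hk i
            have hprod : (∏ i, Γ₀ ((m : ℝ) * x i - (((k i : ℕ) : ℝ) + 1))) ≠ 0 := by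
              intro h; apply hk; unfold gammaPert; rw [h, mul_zero, mul_zero]
            rw [Finset.prod_ne_zero_iff] at hprod
            exact hprod i (Finset.mem_univ i)
          obtain ⟨i, hi⟩ := Function.ne_iff.1 hne
          have s1 := hΓsupp _ (hp j hγ i)
          have s2 := hΓsupp _ (hp j₀ hγ₀ i)
          have e1 : ((j i : ℕ) : ℝ) < ((j₀ i : ℕ) : ℝ) + 1 := by
            have := s1.1; have := s2.2; simp only [Set.mem_Ioo] at s1 s2; linarith [s1.1, s2.2]
          have e2 : ((j₀ i : ℕ) : ℝ) < ((j i : ℕ) : ℝ) + 1 := by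
            simp only [Set.mem_Ioo] at s1 s2; linarith [s1.2, s2.1]
          have n1 : (j i : ℕ) < (j₀ i : ℕ) + 1 := by exact_mod_cast e1
          have n2 : (j₀ i : ℕ) < (j i : ℕ) + 1 := by exact_mod_cast e2
          exact hi (Fin.ext (by omega))
        rw [Finset.sum_eq_single_of_mem j₀ (Finset.mem_univ j₀)
          (fun j _ hj => hzero j hj)]
        exact hterm j₀
      · push_neg at hex
        have : (∑ j : Fin d → Fin (m - 1), ((ω j).toNat : ℝ) * gammaPert β C Γ₀ d m j x) = 0 :=
          Finset.sum_eq_zero fun j _ => hex j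
        rw [this, abs_zero]
        positivity
    refine lt_of_le_of_lt hsum ?_
    -- now show m^(-β) * (d C M^d) < Φ
    have hβpos : (0:ℝ) < (m:ℝ) ^ β := Real.rpow_pos_of_pos hm0 β
    have hkey : (d:ℝ) * C * M ^ d < (m:ℝ) ^ β * Φ := by
      have hexp : (σ * M / stdNormal (1 / σ)) ^ d * Φ = M ^ d := by
        rw [hΦdef, ← mul_pow]
        congr 1
        field_simp
      calc (d:ℝ) * C * M ^ d = ((d:ℝ) * C * (σ * M / stdNormal (1 / σ)) ^ d) * Φ := by
            conv_rhs => rw [mul_assoc, hexp]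
        _ < (m:ℝ) ^ β * Φ := by
            exact mul_lt_mul_of_pos_right hmβ hΦpos
    rw [Real.rpow_neg hm0.le]
    rw [inv_mul_lt_iff₀ hβpos]
    linarith
  -- integral of the base density
  have hGBint : Integrable (fun x : Fin d → ℝ => gaussBase σ d x) := by
    unfold gaussBase
    exact (Integrable.fintype_prod (f := fun (_ : Fin d) (u : ℝ) => stdNormal (u / σ))
      (fun i => stdNormal_integrable.comp_div hσ.ne')).const_mul _
  have hGBval : (∫ x : Fin d → ℝ, gaussBase σ d x) = 1 := by
    unfold gaussBase
    rw [MeasureTheory.integral_const_mul]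
    rw [MeasureTheory.integral_fintype_prod_volume_eq_pow (ι := Fin d) (fun u : ℝ => stdNormal (u / σ))]
    have h1 : (∫ u : ℝ, stdNormal (u / σ)) = σ := by
      rw [MeasureTheory.Measure.integral_comp_div stdNormal σ, integral_stdNormal,
        abs_of_pos hσ, smul_eq_mul, mul_one]
    rw [h1, Fintype.card_fin]
    exact inv_mul_cancel₀ (by positivity)
  -- integrability and integral of each perturbation
  have hγint : ∀ j : Fin d → Fin (m - 1),
      Integrable (fun x : Fin d → ℝ => gammaPert β C Γ₀ d m j x) := by
    intro j
    unfold gammaPert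
    refine (Integrable.const_mul ?_ _).const_mul _
    exact Integrable.fintype_prod
      (f := fun (i : Fin d) (u : ℝ) => Γ₀ ((m : ℝ) * u - (((j i : ℕ) : ℝ) + 1)))
      (fun i => (hΓint.comp_sub_right _).comp_mul_left' hmne)
  have hγval : ∀ j : Fin d → Fin (m - 1),
      (∫ x : Fin d → ℝ, gammaPert β C Γ₀ d m j x) = 0 := by
    intro j
    unfold gammaPert
    rw [MeasureTheory.integral_const_mul, MeasureTheory.integral_const_mul]
    rw [MeasureTheory.integral_fintype_prod_volume_eq_prod (ι := Fin d)
      (fun (i : Fin d) (u : ℝ) => Γ₀ ((m : ℝ) * u - (((j i : ℕ) : ℝ) + 1)))]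
    have hz : ∀ i : Fin d, (∫ u : ℝ, Γ₀ ((m : ℝ) * u - (((j i : ℕ) : ℝ) + 1))) = 0 := by
      intro i
      have h1 := MeasureTheory.Measure.integral_comp_mul_left
        (fun v => Γ₀ (v - (((j i : ℕ) : ℝ) + 1))) (m:ℝ)
      rw [h1, MeasureTheory.integral_sub_right_eq_self, hΓ0, smul_zero]
    rw [Finset.prod_eq_zero (Finset.mem_univ (⟨0, by omega⟩ : Fin d)) (hz _), mul_zero, mul_zero]
  -- integral of the perturbed density
  have hint : (∫ x : Fin d → ℝ, perturbedDensity β C σ Γ₀ d m ω x) = 1 := by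
    unfold perturbedDensity
    have hsint : Integrable (fun x : Fin d → ℝ =>
        ∑ j : Fin d → Fin (m - 1), ((ω j).toNat : ℝ) * gammaPert β C Γ₀ d m j x) := by
      apply integrable_finset_sum
      intro j _
      exact (hγint j).const_mul _
    have hsplit : (∫ x : Fin d → ℝ, (gaussBase σ d x +
        ∑ j : Fin d → Fin (m - 1), ((ω j).toNat : ℝ) * gammaPert β C Γ₀ d m j x)) =
        (∫ x : Fin d → ℝ, gaussBase σ d x) + ∫ x : Fin d → ℝ,
          ∑ j : Fin d → Fin (m - 1), ((ω j).toNat : ℝ) * gammaPert β C Γ₀ d m j x :=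
      MeasureTheory.integral_add hGBint hsint
    have hsval : (∫ x : Fin d → ℝ,
        ∑ j : Fin d → Fin (m - 1), ((ω j).toNat : ℝ) * gammaPert β C Γ₀ d m j x) = 0 := by
      rw [MeasureTheory.integral_finset_sum _ (fun j _ => (hγint j).const_mul _)]
      apply Finset.sum_eq_zero
      intro j _
      rw [MeasureTheory.integral_const_mul, hγval j, mul_zero]
    rw [hsplit, hGBval, hsval, add_zero]
  -- nonnegativity
  have hnonneg : ∀ x : Fin d → ℝ, 0 ≤ perturbedDensity β C σ Γ₀ d m ω x := by
    intro x
    unfold perturbedDensity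
    by_cases hx : (∑ j : Fin d → Fin (m - 1), ((ω j).toNat : ℝ) * gammaPert β C Γ₀ d m j x) = 0
    · rw [hx, add_zero]
      unfold gaussBase
      exact mul_nonneg (by positivity) (Finset.prod_nonneg fun i _ => (stdNormal_pos _).le)
    · have hxi : x ∈ Set.Icc (fun _ => (0 : ℝ)) (fun _ => (1 : ℝ)) :=
        hsupp (Function.mem_support.2 hx)
      rw [Set.mem_Icc] at hxi
      have hxi' : x ∈ Set.Icc (fun _ => (-1 : ℝ)) (fun _ => (1 : ℝ)) := by
        rw [Set.mem_Icc]
        exact ⟨fun i => le_trans (by norm_num) (hxi.1 i), hxi.2⟩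
      have h1 : Φ ≤ gaussBase σ d x := hmin.2 ⟨x, hxi', rfl⟩
      have h2 := hbound x
      have h3 := abs_lt.1 h2
      linarith [h3.1]
  exact ⟨hnonneg, hint, hmin, hbound, hsupp⟩
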